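/- Let a > 0, let Q = [0, a] × [0, a] ⊆ ℝ², let S ⊆ Q be a finite set of points, and let r_max > 0 be such that every point of Q is within distance r_max of some point of S. Let p ∈ S and let k ≥ 1 be an integer with 2·√(k−1)·r_max < a/2. Then the closed ball of radius (2·√(k−1) + 1)·r_max centered at p contains at least k points of S. Equivalently, the smallest radius r_p^* such that the closed ball of radius r_p^* centered at p contains at least k points of S satisfies r_p^* ≤ (2·√(k−1) + 1)·r_max. -/

import Mathlib

open MeasureTheory Metric Set

noncomputable section AuxStmt8

abbrev E2 := EuclideanSpace ℝ (Fin 2)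

/-- Reflection negating the `i`-th coordinate. -/
def refl2 (i : Fin 2) : E2 ≃ₗᵢ[ℝ] E2 :=
  LinearIsometryEquiv.piLpCongrRight 2
    (fun j => if j = i then LinearIsometryEquiv.neg ℝ else LinearIsometryEquiv.refl ℝ ℝ)

lemma refl2_apply (i j : Fin 2) (x : E2) :
    refl2 i x j = if j = i then -x j else x j := by
  have h : refl2 i x j
      = (if j = i then LinearIsometryEquiv.neg ℝ else LinearIsometryEquiv.refl ℝ ℝ) (x j) := rfl
  rw [h]; split <;> simp

lemma refl2_involutive (i : Fin 2) (x : E2) : refl2 i (refl2 i x) = x := by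
  ext j
  rw [refl2_apply, refl2_apply]
  split <;> simp

lemma measurable_eval2 (i : Fin 2) : Measurable (fun x : E2 => x i) :=
  (EuclideanSpace.proj (𝕜 := ℝ) i).continuous.measurable

lemma hyperplane_volume (i : Fin 2) (c : ℝ) : volume {x : E2 | x i = c} = 0 := by
  have h0 : volume {x : E2 | x i = (0:ℝ)} = 0 := by
    have he : {x : E2 | x i = (0:ℝ)}
        = (LinearMap.ker (EuclideanSpace.projₗ (𝕜 := ℝ) i) : Set E2) := by
      ext x; simp [LinearMap.mem_ker]
    rw [he]
    refine Measure.addHaar_submodule _ _ ?_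
    intro htop
    have h1 : (EuclideanSpace.single i (1:ℝ)) ∈
        LinearMap.ker (EuclideanSpace.projₗ (𝕜 := ℝ) i) := by
      rw [htop]; trivial
    simp [LinearMap.mem_ker, EuclideanSpace.single_apply] at h1
  have hmp := measurePreserving_add_left (volume : Measure E2) (EuclideanSpace.single i c)
  have hms : NullMeasurableSet {x : E2 | x i = c} volume :=
    ((measurable_eval2 i) (measurableSet_singleton c)).nullMeasurableSet
  have := hmp.measure_preimage hms
  have hpre : (fun x : E2 => EuclideanSpace.single i c + x) ⁻¹' {x : E2 | x i = c}
      = {x : E2 | x i = (0:ℝ)} := by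
    ext x
    have hu : (EuclideanSpace.single i c : E2) i = c := by
      simp [EuclideanSpace.single_apply]
    simp only [Set.mem_preimage, Set.mem_setOf_eq, PiLp.add_apply, hu]
    constructor
    · intro h; linarith
    · intro h; rw [h]; ring
  rw [hpre] at this
  rw [← this, h0]

/-- Halving a reflection-symmetric set. -/
lemma half_volume (i : Fin 2) (B : Set E2) (hB : MeasurableSet B)
    (hsym : ∀ x : E2, x ∈ B → refl2 i x ∈ B) (c : ℝ) (hc : c ≠ 0) :
    volume B = 2 * volume {x ∈ B | 0 ≤ c * x i} := by
  set A : Set E2 := {x ∈ B | 0 ≤ c * x i} with hA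
  set A' : Set E2 := {x ∈ B | c * x i ≤ 0} with hA'
  have hmA : MeasurableSet A := by
    refine hB.inter ?_
    exact measurableSet_le measurable_const ((measurable_eval2 i).const_mul c)
  have hmA' : MeasurableSet A' := by
    refine hB.inter ?_
    exact measurableSet_le ((measurable_eval2 i).const_mul c) measurable_const
  have hAA' : volume A' = volume A := by
    have hpre : (refl2 i) ⁻¹' A = A' := by
      ext x
      simp only [Set.mem_preimage, hA, hA', Set.mem_setOf_eq]
      have hxi : (refl2 i x) i = -x i := by rw [refl2_apply]; simp
      constructor
      · rintro ⟨h1, h2⟩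
        refine ⟨by simpa [refl2_involutive] using hsym _ h1, ?_⟩
        rw [hxi] at h2; linarith
      · rintro ⟨h1, h2⟩
        exact ⟨hsym _ h1, by rw [hxi]; linarith⟩
    rw [← hpre]
    exact (refl2 i).measurePreserving.measure_preimage hmA.nullMeasurableSet
  have hunion : A ∪ A' = B := by
    ext x
    simp only [hA, hA', Set.mem_union, Set.mem_setOf_eq]
    constructor
    · rintro (⟨h, _⟩ | ⟨h, _⟩) <;> exact h
    · intro h
      rcases le_total 0 (c * x i) with h' | h'
      · exact Or.inl ⟨h, h'⟩
      · exact Or.inr ⟨h, h'⟩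
  have hdisj : AEDisjoint volume A A' := by
    unfold AEDisjoint
    refine measure_mono_null ?_ (hyperplane_volume i 0)
    rintro x ⟨⟨_, h1⟩, ⟨_, h2⟩⟩
    have : c * x i = 0 := le_antisymm h2 h1
    have := mul_eq_zero.mp this
    simp only [Set.mem_setOf_eq]
    tauto
  calc volume B = volume (A ∪ A') := by rw [hunion]
    _ = volume A + volume A' := measure_union₀ hmA'.nullMeasurableSet hdisj
    _ = 2 * volume A := by rw [hAA']; ring

/-- Volume of a quadrant of a ball centered at the origin. -/
lemma quad_volume_zero (ρ : ℝ) (δ : Fin 2 → ℝ) (hδ : ∀ i, δ i ≠ 0) :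
    volume (closedBall (0:E2) ρ)
      = 4 * volume {x ∈ closedBall (0:E2) ρ | 0 ≤ δ 0 * x 0 ∧ 0 ≤ δ 1 * x 1} := by
  have hB : MeasurableSet (closedBall (0:E2) ρ) := measurableSet_closedBall
  have hnorm : ∀ (i : Fin 2) (x : E2), x ∈ closedBall (0:E2) ρ → refl2 i x ∈ closedBall (0:E2) ρ := by
    intro i x hx
    simp only [mem_closedBall, dist_zero_right] at hx ⊢
    rw [(refl2 i).norm_map]; exact hx
  have h1 := half_volume 0 (closedBall (0:E2) ρ) hB (hnorm 0) (δ 0) (hδ 0)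
  set B1 : Set E2 := {x ∈ closedBall (0:E2) ρ | 0 ≤ δ 0 * x 0} with hB1def
  have hmB1 : MeasurableSet B1 :=
    hB.inter (measurableSet_le measurable_const ((measurable_eval2 0).const_mul (δ 0)))
  have hsym1 : ∀ x : E2, x ∈ B1 → refl2 1 x ∈ B1 := by
    rintro x ⟨hx, hx0⟩
    refine ⟨hnorm 1 x hx, ?_⟩
    have : (refl2 1 x) 0 = x 0 := by rw [refl2_apply]; simp
    rw [this]; exact hx0
  have h2 := half_volume 1 B1 hmB1 hsym1 (δ 1) (hδ 1)
  have hset : {x ∈ B1 | 0 ≤ δ 1 * x 1}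
      = {x ∈ closedBall (0:E2) ρ | 0 ≤ δ 0 * x 0 ∧ 0 ≤ δ 1 * x 1} := by
    ext x
    simp only [hB1def, Set.mem_setOf_eq]
    tauto
  rw [h1, h2, hset]; ring

/-- Volume of a quadrant of a ball, arbitrary center. -/
lemma quad_volume (ρ : ℝ) (δ : Fin 2 → ℝ) (hδ : ∀ i, δ i ≠ 0) (p : E2) :
    volume (closedBall p ρ)
      = 4 * volume {x ∈ closedBall p ρ | 0 ≤ δ 0 * (x 0 - p 0) ∧ 0 ≤ δ 1 * (x 1 - p 1)} := by
  have hmp := measurePreserving_add_left (volume : Measure E2) p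
  have hmq : MeasurableSet {x ∈ closedBall p ρ | 0 ≤ δ 0 * (x 0 - p 0) ∧ 0 ≤ δ 1 * (x 1 - p 1)} := by
    refine measurableSet_closedBall.inter (MeasurableSet.inter ?_ ?_)
    · exact measurableSet_le measurable_const (((measurable_eval2 0).sub_const (p 0)).const_mul (δ 0))
    · exact measurableSet_le measurable_const (((measurable_eval2 1).sub_const (p 1)).const_mul (δ 1))
  have hpre1 : (fun x : E2 => p + x) ⁻¹' (closedBall p ρ) = closedBall (0:E2) ρ := by
    ext x
    simp only [Set.mem_preimage, mem_closedBall, dist_zero_right]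
    rw [dist_eq_norm]
    simp
  have hpre2 : (fun x : E2 => p + x) ⁻¹'
      {x ∈ closedBall p ρ | 0 ≤ δ 0 * (x 0 - p 0) ∧ 0 ≤ δ 1 * (x 1 - p 1)}
      = {x ∈ closedBall (0:E2) ρ | 0 ≤ δ 0 * x 0 ∧ 0 ≤ δ 1 * x 1} := by
    ext x
    simp only [Set.mem_preimage, Set.mem_setOf_eq, mem_closedBall, dist_zero_right,
      PiLp.add_apply]
    rw [dist_eq_norm]
    constructor
    · rintro ⟨h1, h2, h3⟩
      refine ⟨by simpa using h1, by simpa using h2, by simpa using h3⟩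
    · rintro ⟨h1, h2, h3⟩
      refine ⟨by simpa using h1, by simpa using h2, by simpa using h3⟩
  have e1 : volume (closedBall p ρ) = volume (closedBall (0:E2) ρ) := by
    rw [← hpre1]
    exact (hmp.measure_preimage measurableSet_closedBall.nullMeasurableSet).symm
  have e2 : volume {x ∈ closedBall p ρ | 0 ≤ δ 0 * (x 0 - p 0) ∧ 0 ≤ δ 1 * (x 1 - p 1)}
      = volume {x ∈ closedBall (0:E2) ρ | 0 ≤ δ 0 * x 0 ∧ 0 ≤ δ 1 * x 1} := by
    rw [← hpre2]
    exact (hmp.measure_preimage hmq.nullMeasurableSet).symm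
  rw [e1, e2]
  exact quad_volume_zero ρ δ hδ

lemma coord_abs_le_dist (x y : E2) (i : Fin 2) : |x i - y i| ≤ dist x y := by
  rw [EuclideanSpace.dist_eq]
  have h1 : |x i - y i| = Real.sqrt (dist (x i) (y i) ^ 2) := by
    rw [Real.sqrt_sq_eq_abs, Real.dist_eq, abs_abs]
  rw [h1]
  apply Real.sqrt_le_sqrt
  exact Finset.single_le_sum (f := fun j => dist (x j) (y j) ^ 2)
    (fun j _ => sq_nonneg _) (Finset.mem_univ i)

end AuxStmt8

/-- Upper bound of source radius, Lemma 5. Let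
`Q = [0,a] × [0,a]` be covered within distance `r_max` by a finite set of
nodes `S ⊆ Q`. Then for any node `p ∈ S` and any integer `k ≥ 1` with
`2√(k−1)·r_max < a/2`, the closed ball of radius `(2√(k−1)+1)·r_max` around
`p` contains at least `k` points of `S`. -/
theorem stmt_8 (a : ℝ) (ha : 0 < a)
    (Q : Set (EuclideanSpace ℝ (Fin 2)))
    (hQ : Q = {x : EuclideanSpace ℝ (Fin 2) |
      x 0 ∈ Set.Icc (0 : ℝ) a ∧ x 1 ∈ Set.Icc (0 : ℝ) a})
    (S : Finset (EuclideanSpace ℝ (Fin 2)))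
    (hSQ : (S : Set (EuclideanSpace ℝ (Fin 2))) ⊆ Q)
    (rmax : ℝ) (hrmax : 0 < rmax)
    (hcov : ∀ q ∈ Q, ∃ s ∈ S, dist q s ≤ rmax)
    (p : EuclideanSpace ℝ (Fin 2)) (hp : p ∈ S)
    (k : ℕ) (hk : 1 ≤ k)
    (hka : 2 * Real.sqrt ((k : ℝ) - 1) * rmax < a / 2) :
    k ≤ ((S : Set (EuclideanSpace ℝ (Fin 2))) ∩
        Metric.closedBall p ((2 * Real.sqrt ((k : ℝ) - 1) + 1) * rmax)).ncard := by
  classical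
  set R' : ℝ := (2 * Real.sqrt ((k : ℝ) - 1) + 1) * rmax with hR'
  -- the target set as a finset
  set T : Finset (EuclideanSpace ℝ (Fin 2)) := S.filter (· ∈ Metric.closedBall p R') with hT
  have hsetT : ((S : Set (EuclideanSpace ℝ (Fin 2))) ∩ Metric.closedBall p R')
      = (T : Set (EuclideanSpace ℝ (Fin 2))) := by
    ext x; simp [hT]
  rw [hsetT, Set.ncard_coe_finset]
  have hpQ : p ∈ Q := hSQ hp
  have hsqrt_nonneg : 0 ≤ Real.sqrt ((k : ℝ) - 1) := Real.sqrt_nonneg _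
  have hpT : p ∈ T := by
    refine Finset.mem_filter.mpr ⟨hp, ?_⟩
    simp only [Metric.mem_closedBall, dist_self]
    positivity
  -- trivial case k = 1
  rcases eq_or_lt_of_le hk with hk1 | hk2
  · rw [← hk1]
    exact Finset.card_pos.mpr ⟨p, hpT⟩
  -- now k ≥ 2
  have hk2' : (2 : ℕ) ≤ k := hk2
  have hkr : (1 : ℝ) ≤ (k : ℝ) - 1 := by
    have : (2 : ℝ) ≤ (k : ℝ) := by exact_mod_cast hk2'
    linarith
  set c : ℝ := Real.sqrt ((k : ℝ) - 1) with hc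
  have hc1 : 1 ≤ c := Real.one_le_sqrt.mpr hkr
  set R : ℝ := 2 * c * rmax with hRdef
  have hRr : rmax ≤ R := by nlinarith
  have hRpos : 0 < R := lt_of_lt_of_le hrmax hRr
  have hRa : R < a / 2 := hka
  -- quadrant directions
  set δ : Fin 2 → ℝ := fun i => if p i ≤ a / 2 then 1 else -1 with hδdef
  have hδne : ∀ i, δ i ≠ 0 := by
    intro i; simp only [hδdef]; split <;> norm_num
  -- the quadrant sets
  set quad : ℝ → Set (EuclideanSpace ℝ (Fin 2)) := fun ρ =>
    {x ∈ Metric.closedBall p ρ | 0 ≤ δ 0 * (x 0 - p 0) ∧ 0 ≤ δ 1 * (x 1 - p 1)} with hquad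
  set D : Set (EuclideanSpace ℝ (Fin 2)) := quad R \ Metric.closedBall p rmax with hD
  -- quadrant within Q
  have hquadQ : quad R ⊆ Q := by
    rintro x ⟨hx1, hx2, hx3⟩
    rw [hQ]
    have key : ∀ i : Fin 2, 0 ≤ δ i * (x i - p i) → x i ∈ Set.Icc (0:ℝ) a := by
      intro i hxi
      have habs : |x i - p i| ≤ R := le_trans (coord_abs_le_dist x p i) hx1
      have hpi : p i ∈ Set.Icc (0:ℝ) a := by
        rw [hQ] at hpQ
        fin_cases i
        · exact hpQ.1
        · exact hpQ.2
      obtain ⟨hpi0, hpia⟩ := hpi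
      by_cases hhalf : p i ≤ a / 2
      · have hδi : δ i = 1 := by simp [hδdef, hhalf]
        rw [hδi, one_mul] at hxi
        have h1 : x i - p i ≤ R := le_trans (le_abs_self _) habs
        constructor
        · linarith
        · linarith
      · have hδi : δ i = -1 := by simp [hδdef, hhalf]
        rw [hδi] at hxi
        have hxi' : x i ≤ p i := by nlinarith
        have h1 : -(x i - p i) ≤ R := le_trans (neg_le_abs _) habs
        push_neg at hhalf
        constructor
        · linarith
        · linarith
    exact ⟨key 0 hx2, key 1 hx3⟩
  -- D is covered by balls around nodes in T.erase p
  have hDcov : D ⊆ ⋃ s ∈ T.erase p, Metric.closedBall s rmax := by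
    intro x hx
    obtain ⟨hxq, hxfar⟩ := hx
    obtain ⟨s, hsS, hds⟩ := hcov x (hquadQ hxq)
    have hsp : dist s p ≤ R' := by
      have h1 : dist x p ≤ R := hxq.1
      calc dist s p ≤ dist s x + dist x p := dist_triangle _ _ _
        _ ≤ rmax + R := by rw [dist_comm s x]; exact add_le_add hds h1
        _ = R' := by rw [hR', hRdef]; ring
    have hsT : s ∈ T := Finset.mem_filter.mpr ⟨hsS, by simpa [Metric.mem_closedBall] using hsp⟩
    have hsnep : s ≠ p := by
      intro h
      apply hxfar
      rw [Metric.mem_closedBall]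
      rw [h] at hds
      exact hds
    refine Set.mem_biUnion (Finset.mem_erase.mpr ⟨hsnep, hsT⟩) ?_
    rw [Metric.mem_closedBall]
    exact hds
  -- volume computations
  have hmq : ∀ ρ : ℝ, MeasurableSet (quad ρ) := by
    intro ρ
    refine measurableSet_closedBall.inter (MeasurableSet.inter ?_ ?_)
    · exact measurableSet_le measurable_const
        (((measurable_eval2 0).sub_const (p 0)).const_mul (δ 0))
    · exact measurableSet_le measurable_const
        (((measurable_eval2 1).sub_const (p 1)).const_mul (δ 1))
  have hqr : quad R ∩ Metric.closedBall p rmax = quad rmax := by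
    ext x
    simp only [hquad, Set.mem_inter_iff, Set.mem_setOf_eq, Metric.mem_closedBall]
    constructor
    · rintro ⟨⟨_, h2, h3⟩, h4⟩; exact ⟨h4, h2, h3⟩
    · rintro ⟨h1, h2, h3⟩; exact ⟨⟨le_trans h1 hRr, h2, h3⟩, h1⟩
  have hDeq : D = quad R \ quad rmax := by
    rw [hD, ← hqr]
    ext x
    simp only [Set.mem_diff, Set.mem_inter_iff]
    tauto
  have hqsub : quad rmax ⊆ quad R := by
    rintro x ⟨h1, h2, h3⟩
    exact ⟨le_trans h1 hRr, h2, h3⟩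
  have hfin : volume (quad rmax) ≠ ⊤ :=
    ne_top_of_le_ne_top (measure_closedBall_lt_top (x := p) (r := rmax)).ne
      (measure_mono (fun x hx => hx.1))
  have hvolD : volume D = volume (quad R) - volume (quad rmax) := by
    rw [hDeq]
    exact measure_diff hqsub (hmq rmax).nullMeasurableSet hfin
  -- the key volume inequality
  have hvq4R := quad_volume R δ hδne p
  have hvq4r := quad_volume rmax δ hδne p
  -- card bound setup
  set m : ℕ := T.card with hm
  have hm1 : 1 ≤ m := Finset.card_pos.mpr ⟨p, hpT⟩
  have hcard_erase : (T.erase p).card = m - 1 := by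
    rw [hm, Finset.card_erase_of_mem hpT]
  have hDle : volume D ≤ (m - 1 : ℕ) * volume (Metric.closedBall p rmax) := by
    calc volume D ≤ volume (⋃ s ∈ T.erase p, Metric.closedBall s rmax) :=
          measure_mono hDcov
      _ ≤ ∑ s ∈ T.erase p, volume (Metric.closedBall s rmax) :=
          measure_biUnion_finset_le _ _
      _ = (m - 1 : ℕ) * volume (Metric.closedBall p rmax) := by
          have hcong : ∀ s ∈ T.erase p, volume (Metric.closedBall s rmax)
              = volume (Metric.closedBall p rmax) := by
            intro s _
            rw [EuclideanSpace.volume_closedBall, EuclideanSpace.volume_closedBall]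
          rw [Finset.sum_congr rfl hcong, Finset.sum_const, hcard_erase, nsmul_eq_mul]
  -- convert to real inequality
  have hballR : volume (Metric.closedBall p R)
      = ENNReal.ofReal (R ^ 2 * Real.pi) := by
    rw [EuclideanSpace.volume_closedBall]
    rw [Fintype.card_fin]
    rw [← ENNReal.ofReal_pow hRpos.le, ← ENNReal.ofReal_mul (by positivity)]
    congr 1
    rw [show ((2:ℕ):ℝ) / 2 + 1 = 2 by norm_num, Real.Gamma_two]
    rw [Real.sq_sqrt Real.pi_pos.le]
    ring
  have hballr : volume (Metric.closedBall p rmax)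
      = ENNReal.ofReal (rmax ^ 2 * Real.pi) := by
    rw [EuclideanSpace.volume_closedBall]
    rw [Fintype.card_fin]
    rw [← ENNReal.ofReal_pow hrmax.le, ← ENNReal.ofReal_mul (by positivity)]
    congr 1
    rw [show ((2:ℕ):ℝ) / 2 + 1 = 2 by norm_num, Real.Gamma_two]
    rw [Real.sq_sqrt Real.pi_pos.le]
    ring
  -- putting things together in ℝ≥0∞
  have hvqR : 4 * volume (quad R) = ENNReal.ofReal (R ^ 2 * Real.pi) := by
    rw [← hvq4R, hballR]
  have hvqr : 4 * volume (quad rmax) = ENNReal.ofReal (rmax ^ 2 * Real.pi) := by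
    rw [← hvq4r, hballr]
  have hsplit : volume (quad R) = volume D + volume (quad rmax) := by
    rw [hvolD]
    rw [tsub_add_cancel_of_le (measure_mono hqsub)]
  have hkey : ENNReal.ofReal (R ^ 2 * Real.pi)
      ≤ (4 * ((m - 1 : ℕ) : ENNReal) + 1) * ENNReal.ofReal (rmax ^ 2 * Real.pi) := by
    calc ENNReal.ofReal (R ^ 2 * Real.pi) = 4 * volume (quad R) := hvqR.symm
      _ = 4 * volume D + 4 * volume (quad rmax) := by rw [hsplit]; ring
      _ ≤ 4 * (((m - 1 : ℕ) : ENNReal) * volume (Metric.closedBall p rmax))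
            + 4 * volume (quad rmax) :=
          add_le_add_left (mul_le_mul_right hDle 4) _
      _ = (4 * ((m - 1 : ℕ) : ENNReal) + 1) * ENNReal.ofReal (rmax ^ 2 * Real.pi) := by
          rw [hvqr, hballr]; ring
  -- convert to a real inequality
  have hm1' : (1:ℝ) ≤ (m:ℝ) := by exact_mod_cast hm1
  have hreal : R ^ 2 * Real.pi ≤ (4 * ((m:ℝ) - 1) + 1) * (rmax ^ 2 * Real.pi) := by
    have hcast : ((m:ℝ) - 1) = ((m - 1 : ℕ) : ℝ) := by
      rw [Nat.cast_sub hm1, Nat.cast_one]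
    have hconv : (4 * ((m - 1 : ℕ) : ENNReal) + 1)
        = ENNReal.ofReal (4 * ((m:ℝ) - 1) + 1) := by
      rw [ENNReal.ofReal_add (by linarith) (by norm_num),
        ENNReal.ofReal_mul (by norm_num : (0:ℝ) ≤ 4), hcast,
        ENNReal.ofReal_natCast, ENNReal.ofReal_one]
      norm_num
    rw [hconv, ← ENNReal.ofReal_mul (by linarith)] at hkey
    exact (ENNReal.ofReal_le_ofReal_iff
      (mul_nonneg (by linarith) (by positivity))).mp hkey
  -- derive k ≤ m
  have hc2 : c ^ 2 = (k : ℝ) - 1 := Real.sq_sqrt (by linarith)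
  have hR2 : R ^ 2 = 4 * ((k:ℝ) - 1) * rmax ^ 2 := by
    rw [hRdef]; rw [← hc2]; ring
  have hfinal : 4 * ((k:ℝ) - 1) ≤ 4 * ((m:ℝ) - 1) + 1 := by
    have ht : 0 < rmax ^ 2 * Real.pi := by positivity
    have hchain : 4 * ((k:ℝ) - 1) * (rmax ^ 2 * Real.pi)
        ≤ (4 * ((m:ℝ) - 1) + 1) * (rmax ^ 2 * Real.pi) := by
      calc 4 * ((k:ℝ) - 1) * (rmax ^ 2 * Real.pi) = R ^ 2 * Real.pi := by
            rw [hR2]; ring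
        _ ≤ (4 * ((m:ℝ) - 1) + 1) * (rmax ^ 2 * Real.pi) := hreal
    exact le_of_mul_le_mul_right hchain ht
  have : (k : ℝ) ≤ (m : ℝ) + 1/4 := by linarith
  have hklem : k ≤ m := by
    by_contra hcon
    push_neg at hcon
    have : (m : ℝ) + 1 ≤ (k : ℝ) := by exact_mod_cast hcon
    linarith
  exact hklem
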